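/- Let G be a (K_3, P_1+S_{1,1,2})-free graph with an induced 5-cycle v_1⋯v_5 v_1. Let V_1 be the set of vertices outside the cycle adjacent to exactly v_2 and v_5 among the cycle vertices, and V_2 the set of vertices outside the cycle adjacent to exactly v_1 and v_3. If |V_1| ≥ 2 and |V_2| ≥ 2, then every vertex of V_1 is adjacent to every vertex of V_2. -/

import Mathlib

/-- The cycle on `k` vertices. -/
def cyc (k : ℕ) : SimpleGraph (Fin k) :=
  SimpleGraph.fromRel (fun i j => j.val = (i.val + 1) % k)

/-- P₁ + S_{1,1,2}: an isolated vertex (0) together with the tree on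
{1,2,3,4,5} with centre 1 adjacent to 2, 3, 4 and 4 adjacent to 5. -/
def P1S112 : SimpleGraph (Fin 6) :=
  SimpleGraph.fromRel (fun a b => (a.val, b.val) ∈ [(1,2),(1,3),(1,4),(4,5)])

lemma cyc5_adj (i j : Fin 5) :
    (cyc 5).Adj i j ↔ i ≠ j ∧ ((j : ℕ) = ((i : ℕ) + 1) % 5 ∨ (i : ℕ) = ((j : ℕ) + 1) % 5) := by
  rw [cyc, SimpleGraph.fromRel_adj]

lemma P1S112_adj (x y : Fin 6) :
    P1S112.Adj x y ↔ x ≠ y ∧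
      ((x.val, y.val) ∈ [(1,2),(1,3),(1,4),(4,5)] ∨
        (y.val, x.val) ∈ [(1,2),(1,3),(1,4),(4,5)]) := by
  rw [P1S112, SimpleGraph.fromRel_adj]

/- The cycle vertices are v₁ = f 0, …, v₅ = f 4.  `V1` consists of the vertices
outside the cycle adjacent to exactly v₂ (= f 1) and v₅ (= f 4), and `V2` of
those adjacent to exactly v₁ (= f 0) and v₃ (= f 2). -/
set_option maxHeartbeats 1600000 in
theorem statement_8 {V : Type*} (G : SimpleGraph V) (htri : G.CliqueFree 3)
    (hfree : IsEmpty (P1S112 ↪g G)) (f : cyc 5 ↪g G) (V1 V2 : Set V)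
    (hV1 : V1 = {v | v ∉ Set.range f ∧ ∀ i, G.Adj v (f i) ↔ (i = 1 ∨ i = 4)})
    (hV2 : V2 = {v | v ∉ Set.range f ∧ ∀ i, G.Adj v (f i) ↔ (i = 0 ∨ i = 2)})
    (h1 : V1.Nontrivial) (h2 : V2.Nontrivial) :
    ∀ a ∈ V1, ∀ b ∈ V2, G.Adj a b := by
  classical
  subst hV1; subst hV2
  intro a ha b hb
  by_contra hab
  obtain ⟨haf, haA⟩ := ha
  obtain ⟨hbf, hbA⟩ := hb
  -- get a second element of V1
  obtain ⟨x, hx, y, hy, hxy⟩ := h1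
  obtain ⟨a', ha'f, ha'A, ha'ne⟩ :
      ∃ a', a' ∉ Set.range f ∧ (∀ i, G.Adj a' (f i) ↔ (i = 1 ∨ i = 4)) ∧ a' ≠ a := by
    by_cases h : x = a
    · exact ⟨y, hy.1, hy.2, by rw [h] at hxy; exact Ne.symm hxy⟩
    · exact ⟨x, hx.1, hx.2, h⟩
  -- basic adjacency facts
  have cadj : ∀ i j, G.Adj (f i) (f j) ↔
      (i ≠ j ∧ ((j : ℕ) = ((i : ℕ) + 1) % 5 ∨ (i : ℕ) = ((j : ℕ) + 1) % 5)) :=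
    fun i j => f.map_adj_iff.trans (cyc5_adj i j)
  have hfeq : ∀ i j : Fin 5, f i = f j ↔ i = j := fun i j => f.injective.eq_iff
  have hna : ∀ i, a ≠ f i := fun i h => haf ⟨i, h.symm⟩
  have hna' : ∀ i, a' ≠ f i := fun i h => ha'f ⟨i, h.symm⟩
  have hnb : ∀ i, b ≠ f i := fun i h => hbf ⟨i, h.symm⟩
  have hfa : ∀ i, f i ≠ a := fun i => (hna i).symm
  have hfa' : ∀ i, f i ≠ a' := fun i => (hna' i).symm
  have hfb : ∀ i, f i ≠ b := fun i => (hnb i).symm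
  have haA' : ∀ i, G.Adj (f i) a ↔ (i = 1 ∨ i = 4) := fun i => by
    rw [G.adj_comm]; exact haA i
  have ha'A' : ∀ i, G.Adj (f i) a' ↔ (i = 1 ∨ i = 4) := fun i => by
    rw [G.adj_comm]; exact ha'A i
  have hbA' : ∀ i, G.Adj (f i) b ↔ (i = 0 ∨ i = 2) := fun i => by
    rw [G.adj_comm]; exact hbA i
  have ha4 : G.Adj a (f 4) := (haA 4).2 (Or.inr rfl)
  have ha'4 : G.Adj a' (f 4) := (ha'A 4).2 (Or.inr rfl)
  have hnb4 : ¬ G.Adj b (f 4) := fun h => by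
    rcases (hbA 4).1 h with h' | h' <;> exact absurd h' (by decide)
  have habne : a ≠ b := fun h => hnb4 (h ▸ ha4)
  have ha'bne : a' ≠ b := fun h => hnb4 (h ▸ ha'4)
  have hbane : b ≠ a := habne.symm
  have hba'ne : b ≠ a' := ha'bne.symm
  have hane' : a ≠ a' := ha'ne.symm
  -- V1 is independent (triangle-freeness via f 1)
  have haa' : ¬ G.Adj a a' := fun h =>
    htri _ (SimpleGraph.is3Clique_triple_iff.mpr
      ⟨h, (haA 1).2 (Or.inl rfl), (ha'A 1).2 (Or.inl rfl)⟩)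
  have ha'a : ¬ G.Adj a' a := fun h => haa' h.symm
  have hba : ¬ G.Adj b a := fun h => hab h.symm
  have hirr : ∀ v : V, ¬ G.Adj v v := fun v => G.irrefl
  rcases em (G.Adj a' b) with hc | hc
  · -- induced P1+S112 on {a; b, f 0, a', f 2, f 3}
    have hc' : G.Adj b a' := hc.symm
    have e0 : ![a, b, f 0, a', f 2, f 3] 0 = a := rfl
    have e1 : ![a, b, f 0, a', f 2, f 3] 1 = b := rfl
    have e2 : ![a, b, f 0, a', f 2, f 3] 2 = f 0 := rfl
    have e3 : ![a, b, f 0, a', f 2, f 3] 3 = a' := rfl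
    have e4 : ![a, b, f 0, a', f 2, f 3] 4 = f 2 := rfl
    have e5 : ![a, b, f 0, a', f 2, f 3] 5 = f 3 := rfl
    refine hfree.false ⟨⟨![a, b, f 0, a', f 2, f 3], ?_⟩, ?_⟩
    · intro x y hxy
      fin_cases x <;> fin_cases y <;> revert hxy <;>
        simp [e0, e1, e2, e3, e4, e5, hfeq, hna, hna', hnb, hfa, hfa', hfb,
          habne, hbane, ha'bne, hba'ne, hane', ha'ne]
    · intro x y
      change G.Adj (![a, b, f 0, a', f 2, f 3] x) (![a, b, f 0, a', f 2, f 3] y) ↔ _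
      fin_cases x <;> fin_cases y <;>
        simp (config := { decide := true }) [e0, e1, e2, e3, e4, e5, P1S112_adj, cadj, haA, haA', ha'A, ha'A', hbA, hbA',
          hab, hba, haa', ha'a, hc, hc', hirr]
  · -- induced P1+S112 on {f 3; f 1, a, a', f 0, b}
    have hc' : ¬ G.Adj b a' := fun h => hc h.symm
    have e0 : ![f 3, f 1, a, a', f 0, b] 0 = f 3 := rfl
    have e1 : ![f 3, f 1, a, a', f 0, b] 1 = f 1 := rfl
    have e2 : ![f 3, f 1, a, a', f 0, b] 2 = a := rfl
    have e3 : ![f 3, f 1, a, a', f 0, b] 3 = a' := rfl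
    have e4 : ![f 3, f 1, a, a', f 0, b] 4 = f 0 := rfl
    have e5 : ![f 3, f 1, a, a', f 0, b] 5 = b := rfl
    refine hfree.false ⟨⟨![f 3, f 1, a, a', f 0, b], ?_⟩, ?_⟩
    · intro x y hxy
      fin_cases x <;> fin_cases y <;> revert hxy <;>
        simp [e0, e1, e2, e3, e4, e5, hfeq, hna, hna', hnb, hfa, hfa', hfb,
          habne, hbane, ha'bne, hba'ne, hane', ha'ne]
    · intro x y
      change G.Adj (![f 3, f 1, a, a', f 0, b] x) (![f 3, f 1, a, a', f 0, b] y) ↔ _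
      fin_cases x <;> fin_cases y <;>
        simp (config := { decide := true }) [e0, e1, e2, e3, e4, e5, P1S112_adj, cadj, haA, haA', ha'A, ha'A', hbA, hbA',
          hab, hba, haa', ha'a, hc, hc', hirr]
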